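/- Let ψ₁, ψ₂ ∈ ℂ′ with δ := Re(ψ₂ψ̄₂ − ψ₁ψ̄₁) > 0, and define the 2×2 matrix over ℂ′: F := δ^{−1/2}·[[ψ̄₂, ψ̄₁], [ψ₁, ψ₂]]. Then F belongs to SU′₁,₁ (in particular det F = 1), and (i′/2)·F·σ₃·F⁻¹ = ½·[[r·i′, −p − q·i′], [−p + q·i′, −r·i′]], where p = −2·Im(ψ₁ψ₂)/δ, q = 2·Re(ψ₁ψ₂)/δ, and r = Re(ψ₂ψ̄₂ + ψ₁ψ̄₁)/δ. -/

import Mathlib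

noncomputable section

/-- Para-complex numbers modeled as the product ring ℝ × ℝ. -/
abbrev Cp : Type := ℝ × ℝ

/-- The para-complex unit i′ = (1, -1), satisfying i′² = 1. -/
def ip : Cp := (1, -1)

/-- Para-complex conjugation. -/
def pconj (z : Cp) : Cp := (z.2, z.1)

/-- Real part of a para-complex number. -/
def pRe (z : Cp) : ℝ := (z.1 + z.2) / 2

/-- Imaginary part of a para-complex number. -/
def pIm (z : Cp) : ℝ := (z.1 - z.2) / 2

/-- Embedding of ℝ into the para-complex numbers. -/
def oR (r : ℝ) : Cp := (r, r)

/-- The exponential of the Banach algebra ℝ × ℝ (componentwise real exponential). -/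
def pexp (z : Cp) : Cp := (Real.exp z.1, Real.exp z.2)

/-- The para-complex derivative ∂_z f = ½(∂ₓf + i′ ∂_y f). -/
def dz (f : Cp → Cp) (p : Cp) : Cp :=
  oR (1/2) * (fderiv ℝ f p (1, 0) + ip * fderiv ℝ f p (0, 1))

/-- The para-complex derivative ∂_z̄ f = ½(∂ₓf − i′ ∂_y f). -/
def dzbar (f : Cp → Cp) (p : Cp) : Cp :=
  oR (1/2) * (fderiv ℝ f p (1, 0) - ip * fderiv ℝ f p (0, 1))

/-- The frame of the normal Gauss map lies in SU′₁,₁ and conjugating σ₃ yields the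
represented normal Gauss map. -/
theorem frame_in_SU11' (ψ₁ ψ₂ : Cp) (δ : ℝ)
    (hδdef : δ = pRe (ψ₂ * pconj ψ₂ - ψ₁ * pconj ψ₁)) (hδ : 0 < δ)
    (F : Matrix (Fin 2) (Fin 2) Cp)
    (hF : F = oR ((Real.sqrt δ)⁻¹) • !![pconj ψ₂, pconj ψ₁; ψ₁, ψ₂])
    (p q r : ℝ)
    (hp : p = -2 * pIm (ψ₁ * ψ₂) / δ)
    (hq : q = 2 * pRe (ψ₁ * ψ₂) / δ)
    (hr : r = pRe (ψ₂ * pconj ψ₂ + ψ₁ * pconj ψ₁) / δ) :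
    (∃ α β : Cp, F = !![α, β; pconj β, pconj α] ∧ α * pconj α - β * pconj β = 1) ∧
    F.det = 1 ∧
    (ip / 2) • (F * !![(1 : Cp), 0; 0, -1] * F⁻¹) =
      oR (1/2) • !![oR r * ip, -(oR p) - oR q * ip; -(oR p) + oR q * ip, -(oR r * ip)] := by
  obtain ⟨x₁, x₂⟩ := ψ₁
  obtain ⟨y₁, y₂⟩ := ψ₂
  have hδne : δ ≠ 0 := ne_of_gt hδ
  have hs : (Real.sqrt δ)⁻¹ * (Real.sqrt δ)⁻¹ * δ = 1 := by
    have h1 : Real.sqrt δ * Real.sqrt δ = δ := Real.mul_self_sqrt hδ.le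
    have h : Real.sqrt δ ≠ 0 := by positivity
    field_simp
    try linarith [h1]
  have hδc : δ = y₁ * y₂ - x₁ * x₂ := by
    rw [hδdef]; simp [pRe, pconj, Prod.mul_def]; ring
  have hss : ((Real.sqrt δ)⁻¹) ^ 2 = δ⁻¹ := by
    field_simp
    try linear_combination hs
    exact (Real.sq_sqrt hδ.le).symm
  set α : Cp := oR (Real.sqrt δ)⁻¹ * (y₂, y₁) with hα
  set β : Cp := oR (Real.sqrt δ)⁻¹ * (x₂, x₁) with hβ
  have hF' : F = !![α, β; pconj β, pconj α] := by
    rw [hF]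
    ext i j
    all_goals fin_cases i <;> fin_cases j <;>
      simp [hα, hβ, oR, pconj, Prod.mul_def, smul_eq_mul, mul_comm]
  have hunit : α * pconj α - β * pconj β = 1 := by
    refine Prod.ext ?_ ?_ <;>
      simp [hα, hβ, oR, pconj, Prod.mul_def, Prod.sub_def] <;>
      linear_combination hs - (Real.sqrt δ)⁻¹ * (Real.sqrt δ)⁻¹ * hδc
  refine ⟨⟨α, β, hF', hunit⟩, ?_, ?_⟩
  · rw [hF', Matrix.det_fin_two_of]
    linear_combination hunit
  · have hGinv : F⁻¹ = !![pconj α, -β; -(pconj β), α] := by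
      apply Matrix.inv_eq_right_inv
      rw [hF']
      ext i j
      all_goals fin_cases i <;> fin_cases j <;>
        (simp [Matrix.mul_apply, Fin.sum_univ_two, Matrix.one_apply,
            hα, hβ, oR, pconj, Prod.mul_def];
          first | ring1 | linear_combination hs - (Real.sqrt δ)⁻¹ * (Real.sqrt δ)⁻¹ * hδc | linear_combination (Real.sqrt δ)⁻¹ * (Real.sqrt δ)⁻¹ * hδc - hs)
    rw [hGinv, hF']
    ext i j
    all_goals fin_cases i <;> fin_cases j <;>
      (simp only [Matrix.mul_apply, Fin.sum_univ_two, Matrix.smul_apply,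
          Matrix.cons_val', Matrix.cons_val_zero, Matrix.cons_val_one,
          Matrix.head_cons, Matrix.head_fin_const, Matrix.empty_val',
          Matrix.cons_val_fin_one, smul_eq_mul, hα, hβ, hp, hq, hr, oR, ip, pconj,
          pRe, pIm, Prod.mk_mul_mk, Prod.mk_add_mk, Prod.neg_mk, Prod.mk_sub_mk,
          Prod.fst_mul, Prod.snd_mul, Prod.fst_add, Prod.snd_add, Prod.fst_sub,
          Prod.snd_sub, Prod.fst_neg, Prod.snd_neg, Prod.fst_div, Prod.snd_div,
          Prod.fst_one, Prod.snd_one, Prod.mk_div_mk, Prod.ext_iff];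
        norm_num;
        ring_nf;
        (try rw [hss]);
        field_simp;
        (try ring1))
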